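/- In the Zorn vector matrix algebra over a field k, an element x = [[a, α],[β, b]] of norm 1 satisfies x³ = 1 if and only if either (α = β = 0, b = a⁻¹, and a³ = 1) or ((α, β) ≠ (0,0) and b = −1 − a). -/
import Mathlib


/-- Zorn vector matrices `[[a, α], [β, b]]` over a field `k`. -/
@[ext]
structure Zorn (k : Type*) where
  a : k
  α : Fin 3 → k
  β : Fin 3 → k
  b : k

namespace Zorn

variable {k : Type*} [Field k]

/-- Dot product on `k³`. -/
def dot (u v : Fin 3 → k) : k := u 0 * v 0 + u 1 * v 1 + u 2 * v 2

/-- Cross product on `k³`. -/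
def cross (u v : Fin 3 → k) : Fin 3 → k :=
  ![u 1 * v 2 - u 2 * v 1, u 2 * v 0 - u 0 * v 2, u 0 * v 1 - u 1 * v 0]

/-- Zorn vector matrix multiplication. -/
instance : Mul (Zorn k) :=
  ⟨fun x y =>
    ⟨x.a * y.a + dot x.α y.β,
     fun i => x.a * y.α i + y.b * x.α i - cross x.β y.β i,
     fun i => y.a * x.β i + x.b * y.β i + cross x.α y.α i,
     dot x.β y.α + x.b * y.b⟩⟩

instance : One (Zorn k) := ⟨⟨1, 0, 0, 1⟩⟩
instance : Zero (Zorn k) := ⟨⟨0, 0, 0, 0⟩⟩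
instance : Add (Zorn k) := ⟨fun x y => ⟨x.a + y.a, x.α + y.α, x.β + y.β, x.b + y.b⟩⟩
instance : Neg (Zorn k) := ⟨fun x => ⟨-x.a, -x.α, -x.β, -x.b⟩⟩
instance : SMul k (Zorn k) := ⟨fun c x => ⟨c * x.a, c • x.α, c • x.β, c * x.b⟩⟩

/-- The norm (determinant) of a Zorn vector matrix. -/
def N (x : Zorn k) : k := x.a * x.b - dot x.α x.β

/-- The bilinear form associated with the norm. -/
def polarN (x y : Zorn k) : k := N (x + y) - N x - N y


lemma mul_def (x y : Zorn k) : x * y =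
    ⟨x.a * y.a + dot x.α y.β,
     fun i => x.a * y.α i + y.b * x.α i - cross x.β y.β i,
     fun i => y.a * x.β i + x.b * y.β i + cross x.α y.α i,
     dot x.β y.α + x.b * y.b⟩ := rfl

lemma one_def : (1 : Zorn k) = ⟨1, 0, 0, 1⟩ := rfl

lemma mk_eq_one_iff (a' : k) (α' β' : Fin 3 → k) (b' : k) :
    (⟨a', α', β', b'⟩ : Zorn k) = 1 ↔
      a' = 1 ∧ α' 0 = 0 ∧ α' 1 = 0 ∧ α' 2 = 0 ∧
      β' 0 = 0 ∧ β' 1 = 0 ∧ β' 2 = 0 ∧ b' = 1 := by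
  rw [one_def, Zorn.mk.injEq]
  constructor
  · rintro ⟨h1, h2, h3, h4⟩
    refine ⟨h1, ?_, ?_, ?_, ?_, ?_, ?_, h4⟩ <;> simp [h2, h3]
  · rintro ⟨h1, h2, h3, h4, h5, h6, h7, h8⟩
    refine ⟨h1, funext fun i => ?_, funext fun i => ?_, h8⟩ <;> fin_cases i <;> simp_all

lemma vec_eq_zero_iff (v : Fin 3 → k) : v = 0 ↔ v 0 = 0 ∧ v 1 = 0 ∧ v 2 = 0 := by
  constructor
  · rintro rfl; simp
  · rintro ⟨h0, h1, h2⟩; funext i; fin_cases i <;> simp_all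

/-- A norm-one Zorn vector matrix `x` satisfies `x³ = 1` iff either
(`α = β = 0`, `b = a⁻¹` and `a³ = 1`) or (`(α, β) ≠ (0,0)` and `b = −1 − a`). -/
theorem cube_eq_one_iff (x : Zorn k) (hx : N x = 1) :
    (x * x) * x = 1 ↔
      (x.α = 0 ∧ x.β = 0 ∧ x.b = x.a⁻¹ ∧ x.a ^ 3 = 1) ∨
      (¬(x.α = 0 ∧ x.β = 0) ∧ x.b = -1 - x.a) := by
  obtain ⟨a, α, β, b⟩ := x
  simp only [N, dot] at hx
  rw [mul_def, mul_def, mk_eq_one_iff]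
  simp only [dot, cross, Matrix.cons_val_zero, Matrix.cons_val_one, Matrix.head_cons,
    Matrix.cons_val_two, Matrix.tail_cons]
  ring_nf
  constructor
  · rintro ⟨e1, e2, e3, e4, e5, e6, e7, e8⟩
    by_cases h0 : α = 0 ∧ β = 0
    · obtain ⟨hα0, hβ0⟩ := h0
      simp only [hα0, hβ0, Pi.zero_apply, mul_zero, zero_mul, add_zero, zero_add,
        sub_zero] at hx e1
      have ha : a ≠ 0 := left_ne_zero_of_mul_eq_one hx
      refine Or.inl ⟨hα0, hβ0, ?_, e1⟩
      field_simp
      linear_combination hx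
    · refine Or.inr ⟨h0, ?_⟩
      have hc : a ^ 2 + a * b + b ^ 2 +
          (α 0 * β 0 + α 1 * β 1 + α 2 * β 2) = 0 := by
        rcases not_and_or.mp h0 with h | h <;>
          rw [vec_eq_zero_iff, not_and_or, not_and_or] at h
        · rcases h with h | h | h
          · exact (mul_eq_zero.mp (by linear_combination e2)).resolve_left h
          · exact (mul_eq_zero.mp (by linear_combination e3)).resolve_left h
          · exact (mul_eq_zero.mp (by linear_combination e4)).resolve_left h
        · rcases h with h | h | h
          · exact (mul_eq_zero.mp (by linear_combination e5)).resolve_left h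
          · exact (mul_eq_zero.mp (by linear_combination e6)).resolve_left h
          · exact (mul_eq_zero.mp (by linear_combination e7)).resolve_left h
      have hc2 : (a + b - 1) * (a + b + 1) = 0 := by linear_combination hc + hx
      rcases mul_eq_zero.mp hc2 with h | h
      · have h2 : (2 : k) = 0 := by
          linear_combination (-1 : k) * e1 - (2 * a + b) * hx + (a * b + a ^ 2 + a - 1) * h
        linear_combination h + h2
      · linear_combination h
  · rintro (⟨hα0, hβ0, hb, ha3⟩ | ⟨_, hb⟩)
    · simp only [hα0, hβ0, Pi.zero_apply, mul_zero, zero_mul, add_zero, zero_add,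
        sub_zero] at hx ⊢
      have ha : a ≠ 0 := left_ne_zero_of_mul_eq_one hx
      have hb3 : b ^ 3 = 1 := by rw [hb, inv_pow, ha3, inv_one]
      refine ⟨by linear_combination ha3, trivial, trivial, trivial, trivial, trivial, trivial, by linear_combination hb3⟩
    · subst hb
      refine ⟨by linear_combination (1 - a) * hx, ?_, ?_, ?_, ?_, ?_, ?_,
        by linear_combination (a + 2) * hx⟩
      · linear_combination (-(α 0)) * hx
      · linear_combination (-(α 1)) * hx
      · linear_combination (-(α 2)) * hx
      · linear_combination (-(β 0)) * hx
      · linear_combination (-(β 1)) * hx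
      · linear_combination (-(β 2)) * hx


end Zorn
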